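/- Let $p$ be an odd prime and $G$ the non-abelian group of order $p^3$ and exponent $p$. Suppose $g_1, \dots, g_m \in G$ with $m \ge p+1$ and $g_1 g_2 \cdots g_m \in Z(G)$. Suppose further there exist indices giving a subsequence $h_1, \dots, h_{p-1}, h_p$ of $(g_1,\dots,g_m)$ such that $h_p$ does not commute with the partial product $h_\alpha h_{\alpha+1} \cdots h_\beta$ for any $1 \le \alpha \le \beta \le p-1$. Then there exists a permutation $\sigma$ of $\{1, \dots, m\}$ such that $g_{\sigma(1)} g_{\sigma(2)} \cdots g_{\sigma(m)} = 1$. -/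

import Mathlib

/-- Turn a list that is a permutation of `finRange m` into a permutation of `Fin m`
whose `ofFn` product is the product over the list. -/
theorem aux_exists_perm_stmt7 {m : ℕ} {α : Type*} (g : Fin m → α) (L : List (Fin m))
    (hL : L.Perm (List.finRange m)) :
    ∃ σ : Equiv.Perm (Fin m), List.ofFn (g ∘ σ) = L.map g := by
  have hlen : L.length = m := by simpa using hL.length_eq
  have hnd : L.Nodup := hL.nodup_iff.mpr (List.nodup_finRange m)
  have hinj : Function.Injective (fun i : Fin m => L.get (Fin.cast hlen.symm i)) := by
    intro a b hab
    have := List.nodup_iff_injective_get.mp hnd hab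
    simpa [Fin.ext_iff] using congrArg Fin.val this
  refine ⟨Equiv.ofBijective _ (Finite.injective_iff_bijective.mp hinj), ?_⟩
  rw [← List.map_ofFn]
  congr 1
  apply List.ext_get (by simp [hlen])
  intro n h1 h2
  simp [Equiv.ofBijective_apply, List.get_ofFn]

open scoped commutatorElement

theorem stmt_7 (p : ℕ) (hp : p.Prime) (hodd : Odd p)
    {G : Type*} [Group G] [Fintype G]
    (hcard : Fintype.card G = p ^ 3)
    (hexp : Monoid.exponent G = p)
    (hna : ∃ a b : G, a * b ≠ b * a)
    (m : ℕ) (hm : p + 1 ≤ m) (g : Fin m → G)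
    (hcentral : (List.ofFn g).prod ∈ Subgroup.center G)
    (ι : Fin p → Fin m) (hι : Function.Injective ι)
    -- `h_p` does not commute with `h_α ⋯ h_β` for any `1 ≤ α ≤ β ≤ p - 1`,
    -- where `h_i = g (ι (i-1))` (indices of `Fin p` are `0`-based)
    (hnc : ∀ a b : ℕ, a ≤ b → b ≤ p - 2 →
      ¬ Commute (g (ι ⟨p - 1, Nat.sub_lt hp.pos one_pos⟩))
        ((((List.ofFn (g ∘ ι)).drop a).take (b - a + 1)).prod)) :
    ∃ σ : Equiv.Perm (Fin m), (List.ofFn (g ∘ σ)).prod = 1 := by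
  haveI : Fact p.Prime := ⟨hp⟩
  haveI : NeZero p := ⟨hp.pos.ne'⟩
  have hp2 : 2 ≤ p := hp.two_le
  -- basic cardinality facts
  have hG3 : Nat.card G = p ^ 3 := by rw [Nat.card_eq_fintype_card, hcard]
  haveI : Nontrivial G := by
    apply Fintype.one_lt_card_iff_nontrivial.mp
    rw [hcard]
    exact Nat.one_lt_pow (by norm_num) hp.one_lt
  -- if the quotient by the center were cyclic, G would be abelian
  have habel : ¬ IsCyclic (G ⧸ Subgroup.center G) := by
    intro hcyc
    obtain ⟨a, b, hab⟩ := hna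
    exact hab (commutative_of_cyclic_center_quotient (QuotientGroup.mk' (Subgroup.center G))
      (QuotientGroup.ker_mk' _).le a b)
  -- the center has cardinality p
  have hdvd : Nat.card (Subgroup.center G) ∣ p ^ 3 :=
    hG3 ▸ Subgroup.card_subgroup_dvd_card _
  obtain ⟨k, hk3, hkeq⟩ := (Nat.dvd_prime_pow hp).mp hdvd
  have hq : Nat.card (G ⧸ Subgroup.center G) * p ^ k = p ^ 3 := by
    rw [← hkeq, ← hG3]
    exact (Subgroup.card_eq_card_quotient_mul_card_subgroup _).symm
  have h1k : 1 ≤ k := by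
    by_contra h
    push_neg at h
    interval_cases k
    · have hnt : Nontrivial (Subgroup.center G) :=
        IsPGroup.center_nontrivial (IsPGroup.of_card hG3)
    -- card center = 1 contradicts nontriviality
      have := Finite.one_lt_card_iff_nontrivial.mpr hnt
      rw [pow_zero] at hkeq
      omega
  have hk1 : k = 1 := by
    by_contra hne
    have hk2 : 2 ≤ k := by omega
    apply habel
    apply isCyclic_of_card_dvd_prime (p := p)
    have : Nat.card (G ⧸ Subgroup.center G) = p ^ (3 - k) := by
      have hpk : 0 < p ^ k := pow_pos hp.pos k
      have : p ^ (3 - k) * p ^ k = p ^ 3 := by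
        rw [← pow_add]
        congr 1
        omega
      exact Nat.eq_of_mul_eq_mul_right hpk (by rw [hq, this])
    rw [this]
    have h1 : p ^ (3 - k) ∣ p ^ 1 := pow_dvd_pow p (by omega)
    simpa using h1
  subst hk1
  have hZ : Nat.card (Subgroup.center G) = p := by simpa using hkeq
  have hQ2 : Nat.card (G ⧸ Subgroup.center G) = p ^ 2 := by
    have hq' : Nat.card (G ⧸ Subgroup.center G) * p = p ^ 3 := by simpa using hq
    apply Nat.eq_of_mul_eq_mul_right hp.pos
    rw [hq']
    ring
  have hcommQ : ∀ a b : G ⧸ Subgroup.center G, a * b = b * a :=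
    IsPGroup.commutative_of_card_eq_prime_sq hQ2
  -- commutators are central
  have hcc : ∀ u v : G, ⁅u, v⁆ ∈ Subgroup.center G := by
    intro u v
    rw [← QuotientGroup.eq_one_iff]
    have : ((⁅u, v⁆ : G) : G ⧸ Subgroup.center G)
        = ⁅(u : G ⧸ Subgroup.center G), (v : G ⧸ Subgroup.center G)⁆ :=
      map_commutatorElement (QuotientGroup.mk' (Subgroup.center G)) u v
    rw [this, commutatorElement_eq_one_iff_commute]
    exact hcommQ _ _
  -- the basic commutator identities
  have id1 : ∀ x y : G, x * y = ⁅x, y⁆ * y * x := by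
    intro x y
    rw [commutatorElement_def]
    group
  have id2 : ∀ x a b : G, ⁅x, a * b⁆ = ⁅x, a⁆ * ⁅x, b⁆ := by
    intro x a b
    have h : ⁅x, a * b⁆ = ⁅x, a⁆ * (a * ⁅x, b⁆ * a⁻¹) := by
      simp only [commutatorElement_def]
      group
    rw [h, Subgroup.mem_center_iff.mp (hcc x b) a]
    group
  -- set up the lists
  set T : List (Fin m) := List.ofFn ι with hTdef
  have hTlen : T.length = p := by simp [hTdef]
  have hTne : T ≠ [] := by
    intro h
    rw [h] at hTlen
    simp at hTlen
    omega
  set e : Fin m := ι ⟨p - 1, Nat.sub_lt hp.pos one_pos⟩ with hedef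
  set S : List (Fin m) := T.dropLast with hSdef
  have hSe : S ++ [e] = T := by
    rw [hSdef, hedef]
    have := List.dropLast_append_getLast hTne
    rwa [List.getLast_ofFn (f := ι) hTne] at this
  have hSlen : S.length = p - 1 := by
    rw [hSdef, List.length_dropLast, hTlen]
  set R : List (Fin m) := (List.finRange m).diff T with hRdef
  have hTR : (T ++ R).Perm (List.finRange m) := by
    apply List.subperm_append_diff_self_of_count_le
    intro x hx
    have h1 : T.count x ≤ 1 := List.nodup_iff_count_le_one.mp (List.nodup_ofFn.mpr hι) x
    have h2 : 0 < (List.finRange m).count x :=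
      List.count_pos_iff.mpr (List.mem_finRange x)
    omega
  -- the family of lists
  set L : ℕ → List (Fin m) := fun k => S.take k ++ e :: (S.drop k ++ R) with hLdef
  have hLperm : ∀ k : ℕ, (L k).Perm (List.finRange m) := by
    intro k
    refine List.Perm.trans ?_ hTR
    have p1 : (S.take k ++ e :: (S.drop k ++ R)).Perm (e :: (S ++ R)) := by
      have h := List.perm_middle (l₁ := S.take k) (l₂ := S.drop k ++ R) (a := e)
      rwa [← List.append_assoc, List.take_append_drop] at h
    have p2 : (e :: (S ++ R)).Perm (T ++ R) := by
      have h := (List.perm_middle (l₁ := S) (l₂ := R) (a := e)).symm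
      rw [← hSe, List.append_assoc]
      simpa using h
    exact p1.trans p2
  set x : G := g e with hxdef
  set C : G := (R.map g).prod with hCdef
  set B : ℕ → G := fun k => (((S.drop k).map g)).prod with hBdef
  set Q : G := (S.map g).prod * (x * C) with hQdef
  set P : ℕ → G := fun k => ((L k).map g).prod with hPdef
  have hAB : ∀ k : ℕ, ((S.take k).map g).prod * B k = (S.map g).prod := by
    intro k
    rw [hBdef, ← List.prod_append, ← List.map_append, List.take_append_drop]
  have hP : ∀ k : ℕ, P k = ⁅x, B k⁆ * Q := by
    intro k
    have hcen := Subgroup.mem_center_iff.mp (hcc x (B k))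
    show ((S.take k ++ e :: (S.drop k ++ R)).map g).prod = _
    rw [List.map_append, List.prod_append, List.map_cons, List.prod_cons,
      List.map_append, List.prod_append]
    calc ((S.take k).map g).prod * (g e * (((S.drop k).map g).prod * C))
        = ((S.take k).map g).prod * ((x * B k) * C) := by
          rw [hxdef, hBdef, mul_assoc]
      _ = ((S.take k).map g).prod * ((⁅x, B k⁆ * B k * x) * C) := by rw [← id1]
      _ = (((S.take k).map g).prod * ⁅x, B k⁆) * (B k * (x * C)) := by
          simp only [mul_assoc]
      _ = (⁅x, B k⁆ * ((S.take k).map g).prod) * (B k * (x * C)) := by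
          rw [hcen]
      _ = ⁅x, B k⁆ * ((((S.take k).map g).prod * B k) * (x * C)) := by
          simp only [mul_assoc]
      _ = ⁅x, B k⁆ * Q := by rw [hAB k, hQdef]
  -- each P k is central
  have hPcen : ∀ k : ℕ, P k ∈ Subgroup.center G := by
    intro k
    rw [← QuotientGroup.eq_one_iff]
    set φ : G →* G ⧸ Subgroup.center G := QuotientGroup.mk' (Subgroup.center G) with hφ
    have h1 : ((P k : G) : G ⧸ Subgroup.center G) = (((L k).map g).map φ).prod := by
      rw [hPdef]
      exact map_list_prod φ _
    have h2 : ((((L k).map g).map φ)).Perm (((List.finRange m).map g).map φ) :=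
      ((hLperm k).map g).map φ
    have h3 : (((List.finRange m).map g).map φ).prod = φ (List.ofFn g).prod := by
      rw [← List.ofFn_eq_map, ← map_list_prod]
    rw [h1, h2.prod_eq' (List.pairwise_of_forall fun a b => hcommQ a b), h3]
    exact QuotientGroup.eq_one_iff _ |>.mpr hcentral
  -- distinctness of the P k for k < j ≤ p - 1
  have hPinj : ∀ k j : ℕ, k < j → j ≤ p - 1 → P k ≠ P j := by
    intro k j hkj hjp heq
    have h1 : ⁅x, B k⁆ = ⁅x, B j⁆ := by
      have := (hP k).symm.trans (heq.trans (hP j))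
      exact mul_right_cancel this
    have hsplit : S.drop k = (S.drop k).take (j - k) ++ S.drop j := by
      conv_lhs => rw [← List.take_append_drop (j - k) (S.drop k)]
      rw [List.drop_drop]
      congr 2
      omega
    set M : G := (((S.drop k).take (j - k)).map g).prod with hMdef
    have hBk : B k = M * B j := by
      rw [hBdef]
      simp only
      rw [hsplit, List.map_append, List.prod_append]
    have hM1 : ⁅x, M⁆ = 1 := by
      have := h1
      rw [hBk, id2] at this
      exact mul_right_cancel (by rw [one_mul]; exact this)
    have hcom : Commute x M := commutatorElement_eq_one_iff_commute.mp hM1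
    apply hnc k (j - 1) (by omega) (by omega)
    have hseg : (((List.ofFn (g ∘ ι)).drop k).take (j - 1 - k + 1)) =
        ((S.drop k).take (j - k)).map g := by
      have hofn : List.ofFn (g ∘ ι) = T.map g := (List.map_ofFn (f := ι) (g := g)).symm
      have hSg : S.map g = (T.map g).take (p - 1) := by
        rw [hSdef, List.map_dropLast, List.dropLast_eq_take]
        congr 1
        simp [hTlen]
      have hidx : j - 1 - k + 1 = j - k := by omega
      rw [hofn, hidx, List.map_take, List.map_drop, hSg, List.drop_take, List.take_take]
      congr 1
      omega
    rw [hseg]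
    exact hcom
  -- the injective map into the center
  have hZfin : Nat.card (Subgroup.center G) = Nat.card (Fin p) := by
    rw [hZ, Nat.card_eq_fintype_card, Fintype.card_fin]
  let f : Fin p → Subgroup.center G := fun k => ⟨P k.val, hPcen k.val⟩
  have hfinj : Function.Injective f := by
    intro a b hab
    have hPab : P a.val = P b.val := congrArg Subtype.val hab
    by_contra hne
    rcases lt_trichotomy a.val b.val with h | h | h
    · exact hPinj a.val b.val h (by omega) hPab
    · exact hne (Fin.ext h)
    · exact hPinj b.val a.val h (by omega) hPab.symm
  have hfsurj : Function.Surjective f :=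
    ((Nat.bijective_iff_injective_and_card f).mpr ⟨hfinj, hZfin.symm⟩).2
  obtain ⟨k, hk⟩ := hfsurj ⟨1, Subgroup.one_mem _⟩
  have hPk1 : P k.val = 1 := congrArg Subtype.val hk
  obtain ⟨σ, hσ⟩ := aux_exists_perm_stmt7 g (L k.val) (hLperm k.val)
  exact ⟨σ, by rw [hσ]; exact hPk1⟩
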